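/- Let (𝐬, r(𝐬)) ∈ 𝒮 with 𝐬 = ([i_1,j_1],…,[i_r,j_r]) and r(𝐬) = (1, r_1, …, r_k). Let 1 ≤ p ≤ r−1 with r_m ≤ p < r_{m+1} for some 0 ≤ m ≤ k−1, suppose 𝐬(p−1,p+1) is contained in a prime factor of 𝐬, and let ε ∈ {0,1} be such that i_{p+ε} < i_{p+1−ε} ≤ j_{p+ε} < j_{p+1−ε}. Then: (a) if 1 ≤ s ≤ r satisfies i_{p+ε} ≤ i_s < i_{p+1−ε} ≤ j_{p+ε} ≤ j_s < j_{p+1−ε}, then s = p+ε; (b) if 1 ≤ s ≤ r satisfies i_{p+ε} < i_s ≤ i_{p+1−ε} ≤ j_{p+ε} < j_s ≤ j_{p+1−ε}, then s = p+1−ε. -/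
import Mathlib


namespace AltSnakePaper

/-- `[i,j] ∈ 𝕀ₙ`: the interval condition `0 ≤ j - i ≤ n + 1`. -/
def InIn (n : ℕ) (i j : ℤ) : Prop := 0 ≤ j - i ∧ j - i ≤ (n : ℤ) + 1

/-- The intervals `[i1,j1]` and `[i2,j2]` overlap. -/
def Overlap (i1 j1 i2 j2 : ℤ) : Prop :=
  (i1 < i2 ∧ i2 ≤ j1 ∧ j1 < j2) ∨ (i2 < i1 ∧ i1 ≤ j2 ∧ j2 < j1)

/-- The pair `([i1,j1],[i2,j2])` is connected. -/
def ConnPair (n : ℕ) (i1 j1 i2 j2 : ℤ) : Prop :=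
  Overlap i1 j1 i2 j2 ∧ InIn n i1 j2 ∧ InIn n i2 j1

/-- The subtuple `𝐬(a,b)` (entries with indices `a+1, …, b`) lies in `S_→`. -/
def SRight (ii jj : ℕ → ℤ) (a b : ℕ) : Prop :=
  ∀ s, a + 1 ≤ s → s + 1 ≤ b → ii s < ii (s + 1) ∧ jj s < jj (s + 1)

/-- The subtuple `𝐬(a,b)` (entries with indices `a+1, …, b`) lies in `S_←`. -/
def SLeft (ii jj : ℕ → ℤ) (a b : ℕ) : Prop :=
  ∀ s, a + 1 ≤ s → s + 1 ≤ b → ii (s + 1) < ii s ∧ jj (s + 1) < jj s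

/-- `(𝐬, r(𝐬))` is an alternating snake, where `𝐬 = ([i_1,j_1],…,[i_r,j_r])`
(encoded by `ii jj : ℕ → ℤ`, entries indexed `1,…,r`) and
`r(𝐬) = (r_0, r_1, …, r_k)` (encoded by `rr : ℕ → ℕ`). -/
structure IsAltSnake (n r k : ℕ) (rr : ℕ → ℕ) (ii jj : ℕ → ℤ) : Prop where
  hr : 1 ≤ r
  hk : k ≤ r
  mem : ∀ s, 1 ≤ s → s ≤ r → InIn n (ii s) (jj s)
  distinct : ∀ s p, 1 ≤ s → s ≤ r → 1 ≤ p → p ≤ r → s ≠ p → ii s ≠ ii p ∨ jj s ≠ jj p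
  rr0 : rr 0 = 1
  rrk : rr k = r
  rrmono : ∀ m, m < k → rr m < rr (m + 1)
  mono : ∀ m, 1 ≤ m → m ≤ k →
      SRight ii jj (rr (m - 1) - 1) (rr m) ∨ SLeft ii jj (rr (m - 1) - 1) (rr m)
  alt : ∀ m, 1 ≤ m → m < k →
      (SRight ii jj (rr (m - 1) - 1) (rr m) ↔ SLeft ii jj (rr m - 1) (rr (m + 1)))
  nonoverlap : ∀ m s t, 1 ≤ m → m < k → 1 ≤ s → s < rr m → rr m < t → t ≤ r →
      ¬ Overlap (ii s) (jj s) (ii t) (jj t)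

/-- The subtuple `𝐬(a,b)` is connected: all consecutive pairs are connected. -/
def SegConnected (n : ℕ) (ii jj : ℕ → ℤ) (a b : ℕ) : Prop :=
  ∀ s, a + 1 ≤ s → s + 1 ≤ b → ConnPair n (ii s) (jj s) (ii (s + 1)) (jj (s + 1))

/-- The subtuple `𝐬(a,b)` (with its induced r-vector, whose internal break points
are the `rr m` with `a + 1 < rr m < b`) is prime. -/
def SegPrime (n k : ℕ) (rr : ℕ → ℕ) (ii jj : ℕ → ℤ) (a b : ℕ) : Prop :=
  SegConnected n ii jj a b ∧
    ∀ m, 1 ≤ m → m < k → a + 1 < rr m → rr m < b →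
      ii (rr m - 1) ≠ ii (rr m + 1) ∧ jj (rr m - 1) ≠ jj (rr m + 1)

/-- The subtuple `𝐬(a,b)` (with its induced r-vector) is stable. -/
def SegStable (k : ℕ) (rr : ℕ → ℕ) (ii jj : ℕ → ℤ) (a b : ℕ) : Prop :=
  ∀ m, 1 ≤ m → m < k → a + 1 < rr m → rr m < b →
    (ii (rr m + 1) < ii (rr m - 1) → jj (rr m + 1) < ii (rr m - 1)) ∧
    (jj (rr m - 1) < jj (rr m + 1) → jj (rr m - 1) < ii (rr m + 1))

/-- The alternating snake is stable. -/
def Stable (k : ℕ) (rr : ℕ → ℕ) (ii jj : ℕ → ℤ) : Prop :=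
  ∀ m, 1 ≤ m → m < k →
    (ii (rr m + 1) < ii (rr m - 1) → jj (rr m + 1) < ii (rr m - 1)) ∧
    (jj (rr m - 1) < jj (rr m + 1) → jj (rr m - 1) < ii (rr m + 1))

/-- The boundary condition allowing a cut of the snake at `p = rr m - ε`:
`a_{r_m-1} = a_{r_m+1}` for some `a ∈ {i, j}`, with `ε ∈ {0,1}` chosen so that, `b`
denoting the other member of `{i,j}`, one has `b_{r_m−1+2ε} < b_{r_m+1−2ε}` if
`𝐬(r_m−2, r_m) ∈ S_←` and `b_{r_m+1−2ε} < b_{r_m−1+2ε}` if `𝐬(r_m−2, r_m) ∈ S_→`. -/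
def BoundaryCond (k : ℕ) (rr : ℕ → ℕ) (ii jj : ℕ → ℤ) (m ε : ℕ) : Prop :=
  (ii (rr m - 1) = ii (rr m + 1) ∧
    (SLeft ii jj (rr m - 2) (rr m) → jj (rr m - 1 + 2 * ε) < jj (rr m + 1 - 2 * ε)) ∧
    (SRight ii jj (rr m - 2) (rr m) → jj (rr m + 1 - 2 * ε) < jj (rr m - 1 + 2 * ε))) ∨
  (jj (rr m - 1) = jj (rr m + 1) ∧
    (SLeft ii jj (rr m - 2) (rr m) → ii (rr m - 1 + 2 * ε) < ii (rr m + 1 - 2 * ε)) ∧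
    (SRight ii jj (rr m - 2) (rr m) → ii (rr m + 1 - 2 * ε) < ii (rr m - 1 + 2 * ε)))

/-- `p` is an admissible cut point for the prime decomposition. -/
def CutAt (n r k : ℕ) (rr : ℕ → ℕ) (ii jj : ℕ → ℤ) (p : ℕ) : Prop :=
  p = r ∨
  ¬ ConnPair n (ii p) (jj p) (ii (p + 1)) (jj (p + 1)) ∨
  ∃ m ε, 1 ≤ m ∧ m < k ∧ ε ≤ 1 ∧ p = rr m - ε ∧ BoundaryCond k rr ii jj m ε

/-- `0 = c 0 < c 1 < ⋯ < c L = r` are the cut points of a prime decomposition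
of the snake, the prime factors being the segments `𝐬(c t, c (t+1))`. -/
def IsPrimeDecomp (n r k : ℕ) (rr : ℕ → ℕ) (ii jj : ℕ → ℤ) (c : ℕ → ℕ) (L : ℕ) : Prop :=
  1 ≤ L ∧ c 0 = 0 ∧ c L = r ∧ (∀ t, t < L → c t < c (t + 1)) ∧
  (∀ t, t < L → SegPrime n k rr ii jj (c t) (c (t + 1))) ∧
  (∀ t, 1 ≤ t → t ≤ L → CutAt n r k rr ii jj (c t))

/-- The segment `𝐬(a,b)` is contained in a prime factor of `𝐬`. -/
def ContainedInPF (n r k : ℕ) (rr : ℕ → ℕ) (ii jj : ℕ → ℤ) (a b : ℕ) : Prop :=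
  ∃ c L t, IsPrimeDecomp n r k rr ii jj c L ∧ t < L ∧ c t ≤ a ∧ b ≤ c (t + 1)


section Helpers

variable {n r k : ℕ} {rr : ℕ → ℕ} {ii jj : ℕ → ℤ}

lemma rr_lt_rr (h : IsAltSnake n r k rr ii jj) {a b : ℕ} (hab : a < b) (hbk : b ≤ k) :
    rr a < rr b := by
  induction b with
  | zero => omega
  | succ b ih =>
    rcases Nat.lt_succ_iff_lt_or_eq.mp hab with hlt | heq
    · exact lt_trans (ih hlt (by omega)) (h.rrmono b (by omega))
    · subst heq; exact h.rrmono a (by omega)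

lemma rr_le_rr (h : IsAltSnake n r k rr ii jj) {a b : ℕ} (hab : a ≤ b) (hbk : b ≤ k) :
    rr a ≤ rr b := by
  rcases Nat.eq_or_lt_of_le hab with he | hlt
  · rw [he]
  · exact le_of_lt (rr_lt_rr h hlt hbk)

lemma one_le_rr (h : IsAltSnake n r k rr ii jj) {m : ℕ} (hm : m ≤ k) : 1 ≤ rr m := by
  have := rr_le_rr h (Nat.zero_le m) hm
  rw [h.rr0] at this
  exact this

lemma rr_le_r (h : IsAltSnake n r k rr ii jj) {m : ℕ} (hm : m ≤ k) : rr m ≤ r := by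
  have := rr_le_rr h hm (le_refl k)
  rwa [h.rrk] at this

lemma rr_inj (h : IsAltSnake n r k rr ii jj) {a b : ℕ} (ha : a ≤ k) (hb : b ≤ k)
    (he : rr a = rr b) : a = b := by
  rcases lt_trichotomy a b with hl | he' | hl
  · have := rr_lt_rr h hl hb; omega
  · exact he'
  · have := rr_lt_rr h hl ha; omega

lemma sright_chain {a b : ℕ} (H : SRight ii jj a b) {x y : ℕ} (hx : a + 1 ≤ x)
    (hxy : x < y) (hyb : y ≤ b) : ii x < ii y ∧ jj x < jj y := by
  induction y with
  | zero => omega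
  | succ y ih =>
    rcases Nat.lt_succ_iff_lt_or_eq.mp hxy with hlt | heq
    · have h1 := ih hlt (by omega)
      have h2 := H y (by omega) (by omega)
      exact ⟨lt_trans h1.1 h2.1, lt_trans h1.2 h2.2⟩
    · subst heq; exact H x hx hyb

lemma sleft_chain {a b : ℕ} (H : SLeft ii jj a b) {x y : ℕ} (hx : a + 1 ≤ x)
    (hxy : x < y) (hyb : y ≤ b) : ii y < ii x ∧ jj y < jj x := by
  induction y with
  | zero => omega
  | succ y ih =>
    rcases Nat.lt_succ_iff_lt_or_eq.mp hxy with hlt | heq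
    · have h1 := ih hlt (by omega)
      have h2 := H y (by omega) (by omega)
      exact ⟨lt_trans h2.1 h1.1, lt_trans h2.2 h1.2⟩
    · subst heq; exact H x hx hyb

lemma run_not_both (h : IsAltSnake n r k rr ii jj) {m : ℕ} (hm1 : 1 ≤ m) (hmk : m ≤ k) :
    ¬ (SRight ii jj (rr (m - 1) - 1) (rr m) ∧ SLeft ii jj (rr (m - 1) - 1) (rr m)) := by
  rintro ⟨hR, hL⟩
  have hm' : m - 1 + 1 = m := by omega
  have h1 := h.rrmono (m - 1) (by omega)
  rw [hm'] at h1
  have h2 : 1 ≤ rr (m - 1) := one_le_rr h (by omega)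
  have hp := hR (rr (m - 1)) (by omega) (by omega)
  have hq := hL (rr (m - 1)) (by omega) (by omega)
  omega

lemma slr_alt (h : IsAltSnake n r k rr ii jj) {m : ℕ} (h1 : 1 ≤ m) (h2 : m < k) :
    SLeft ii jj (rr (m - 1) - 1) (rr m) ↔ SRight ii jj (rr m - 1) (rr (m + 1)) := by
  constructor
  · intro hL
    rcases h.mono (m + 1) (by omega) (by omega) with hR | hL2
    · simpa using hR
    · exfalso
      have hR1 : SRight ii jj (rr (m - 1) - 1) (rr m) :=
        (h.alt m h1 h2).mpr (by simpa using hL2)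
      exact run_not_both h h1 (by omega) ⟨hR1, hL⟩
  · intro hR
    rcases h.mono m h1 (by omega) with hR1 | hL1
    · exfalso
      have hL2 : SLeft ii jj (rr m - 1) (rr (m + 1)) := (h.alt m h1 h2).mp hR1
      have : ¬ _ := run_not_both h (show 1 ≤ m + 1 by omega) (show m + 1 ≤ k by omega)
      exact this ⟨by simpa using hR, by simpa using hL2⟩
    · exact hL1

lemma sright_neg (ii jj : ℕ → ℤ) (a b : ℕ) :
    SRight (fun t => -jj t) (fun t => -ii t) a b ↔ SLeft ii jj a b := by
  unfold SRight SLeft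
  constructor
  · intro H s h1 h2
    have h3 := H s h1 h2
    beta_reduce at h3
    exact ⟨by omega, by omega⟩
  · intro H s h1 h2
    have h3 := H s h1 h2
    beta_reduce
    exact ⟨by omega, by omega⟩

lemma sleft_neg (ii jj : ℕ → ℤ) (a b : ℕ) :
    SLeft (fun t => -jj t) (fun t => -ii t) a b ↔ SRight ii jj a b := by
  unfold SRight SLeft
  constructor
  · intro H s h1 h2
    have h3 := H s h1 h2
    beta_reduce at h3
    exact ⟨by omega, by omega⟩
  · intro H s h1 h2
    have h3 := H s h1 h2
    beta_reduce
    exact ⟨by omega, by omega⟩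

lemma connPair_neg (n : ℕ) (i1 j1 i2 j2 : ℤ) :
    ConnPair n (-j1) (-i1) (-j2) (-i2) ↔ ConnPair n i1 j1 i2 j2 := by
  unfold ConnPair Overlap InIn
  omega

lemma boundaryCond_neg (k : ℕ) (rr : ℕ → ℕ) (ii jj : ℕ → ℤ) (m ε : ℕ) :
    BoundaryCond k rr (fun t => -jj t) (fun t => -ii t) m ε ↔ BoundaryCond k rr ii jj m ε := by
  unfold BoundaryCond
  rw [sleft_neg ii jj, sright_neg ii jj]
  beta_reduce
  simp only [neg_lt_neg_iff, neg_inj]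
  tauto

lemma isAltSnake_neg (h : IsAltSnake n r k rr ii jj) :
    IsAltSnake n r k rr (fun t => -jj t) (fun t => -ii t) where
  hr := h.hr
  hk := h.hk
  mem s h1 h2 := by
    have h3 := h.mem s h1 h2
    unfold InIn at h3 ⊢
    beta_reduce
    omega
  distinct s p h1 h2 h3 h4 h5 := by
    rcases h.distinct s p h1 h2 h3 h4 h5 with hi | hj
    · right; beta_reduce; omega
    · left; beta_reduce; omega
  rr0 := h.rr0
  rrk := h.rrk
  rrmono := h.rrmono
  mono m h1 h2 := by
    rcases h.mono m h1 h2 with hR | hL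
    · exact Or.inr ((sleft_neg ii jj _ _).mpr hR)
    · exact Or.inl ((sright_neg ii jj _ _).mpr hL)
  alt m h1 h2 := by
    rw [sright_neg ii jj, sleft_neg ii jj]
    exact slr_alt h h1 h2
  nonoverlap m s t h1 h2 h3 h4 h5 h6 := by
    intro hov
    apply h.nonoverlap m s t h1 h2 h3 h4 h5 h6
    unfold Overlap at hov ⊢
    beta_reduce at hov
    omega

lemma containedInPF_neg {a b : ℕ} (hc : ContainedInPF n r k rr ii jj a b) :
    ContainedInPF n r k rr (fun t => -jj t) (fun t => -ii t) a b := by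
  obtain ⟨c, L, t, ⟨hL1, hc0, hcL, hmono, hprime, hcut⟩, htL, hta, htb⟩ := hc
  refine ⟨c, L, t, ⟨hL1, hc0, hcL, hmono, ?_, ?_⟩, htL, hta, htb⟩
  · intro u hu
    obtain ⟨hconn, hpr⟩ := hprime u hu
    constructor
    · intro s h1 h2
      exact (connPair_neg n _ _ _ _).mpr (hconn s h1 h2)
    · intro m' h1 h2 h3 h4
      obtain ⟨hi, hj⟩ := hpr m' h1 h2 h3 h4
      refine ⟨?_, ?_⟩ <;> beta_reduce <;> omega
  · intro u h1 h2
    rcases hcut u h1 h2 with hc1 | hc2 | hc3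
    · exact Or.inl hc1
    · refine Or.inr (Or.inl ?_)
      intro hcp
      exact hc2 ((connPair_neg n _ _ _ _).mp hcp)
    · obtain ⟨m', ε', a1, a2, a3, a4, a5⟩ := hc3
      exact Or.inr (Or.inr ⟨m', ε', a1, a2, a3, a4, (boundaryCond_neg k rr ii jj m' ε').mpr a5⟩)

end Helpers

section Cores

variable {n r k : ℕ} {rr : ℕ → ℕ} {ii jj : ℕ → ℤ}

lemma core_a (h : IsAltSnake n r k rr ii jj)
    (p : ℕ) (hp1 : 1 ≤ p) (hp2 : p + 1 ≤ r)
    (m : ℕ) (hmk : m + 1 ≤ k) (hmp1 : rr m ≤ p) (hmp2 : p < rr (m + 1))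
    (hcont : ContainedInPF n r k rr ii jj (p - 1) (p + 1))
    (he1 : ii p < ii (p + 1)) (he2 : ii (p + 1) ≤ jj p) (he3 : jj p < jj (p + 1))
    (s : ℕ) (hs1 : 1 ≤ s) (hs2 : s ≤ r)
    (c1 : ii p ≤ ii s) (c2 : ii s < ii (p + 1))
    (c3 : jj p ≤ jj s) (c4 : jj s < jj (p + 1)) : s = p := by
  have hrm1 : 1 ≤ rr m := one_le_rr h (by omega)
  have hRm1 : SRight ii jj (rr m - 1) (rr (m + 1)) := by
    rcases h.mono (m + 1) (by omega) hmk with hR | hL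
    · simpa using hR
    · exfalso
      have hL' : SLeft ii jj (rr m - 1) (rr (m + 1)) := hL
      have := hL' p (by omega) (by omega)
      omega
  by_cases hsp : s = p
  · exact hsp
  exfalso
  have hsp1 : s ≠ p + 1 := by intro e; rw [e] at c2; omega
  by_cases hcase1 : s < rr m
  · have hm1 : 1 ≤ m := by
      by_contra hm0
      have hz : m = 0 := by omega
      rw [hz, h.rr0] at hcase1
      omega
    exact h.nonoverlap m s (p + 1) hm1 (by omega) hs1 hcase1 (by omega) hp2
      (Or.inl ⟨c2, by omega, c4⟩)
  by_cases hcase2 : s ≤ rr (m + 1)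
  · push_neg at hcase1
    rcases Nat.lt_or_ge s p with hlt | hge
    · have := sright_chain hRm1 (x := s) (y := p) (by omega) hlt (by omega)
      omega
    · have hgt : p + 1 < s := by omega
      have := sright_chain hRm1 (x := p + 1) (y := s) (by omega) hgt hcase2
      omega
  push_neg at hcase1 hcase2
  have hμk : m + 1 < k := by
    by_contra hc
    have hz : m + 1 = k := by omega
    rw [hz, h.rrk] at hcase2
    omega
  by_cases hq : p + 1 < rr (m + 1)
  · exact h.nonoverlap (m + 1) (p + 1) s (by omega) hμk (by omega) hq hcase2 hs2
      (Or.inr ⟨c2, by omega, c4⟩)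
  have hq' : rr (m + 1) = p + 1 := by omega
  have hLm2 : SLeft ii jj (rr (m + 1) - 1) (rr (m + 2)) :=
    (h.alt (m + 1) (by omega) hμk).mp (by simpa using hRm1)
  have hpr2 : rr (m + 1) < rr (m + 2) := h.rrmono (m + 1) hμk
  have hs3 : s ≤ rr (m + 2) := by
    by_contra hs4
    push_neg at hs4
    have hm2k : m + 2 < k := by
      by_contra hc
      have hz : m + 2 = k := by omega
      rw [hz, h.rrk] at hs4
      omega
    exact h.nonoverlap (m + 2) (p + 1) s (by omega) hm2k (by omega) (by omega) hs4 hs2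
      (Or.inr ⟨c2, by omega, c4⟩)
  have hpair : ii (p + 2) < ii (p + 1) ∧ jj (p + 2) < jj (p + 1) :=
    hLm2 (p + 1) (by omega) (by omega)
  obtain ⟨hpa, hpb⟩ := hpair
  have hs5 : ii s ≤ ii (p + 2) ∧ jj s ≤ jj (p + 2) := by
    rcases Nat.eq_or_lt_of_le (show p + 2 ≤ s by omega) with he | hlt
    · rw [← he]
      exact ⟨le_refl _, le_refl _⟩
    · have := sleft_chain hLm2 (x := p + 2) (y := s) (by omega) hlt hs3
      exact ⟨le_of_lt this.1, le_of_lt this.2⟩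
  obtain ⟨hs5a, hs5b⟩ := hs5
  obtain ⟨c, L, t, ⟨hL1, hc0, hcL, hcmono, hcprime, hccut⟩, htL, hta, htb⟩ := hcont
  by_cases hbq : p + 1 < c (t + 1)
  · -- primality at break m+1
    have hpr := (hcprime t htL).2 (m + 1) (by omega) hμk (by omega) (by omega)
    rw [hq'] at hpr
    have hpr1 : ii p ≠ ii (p + 2) := hpr.1
    have hpr2' : jj p ≠ jj (p + 2) := hpr.2
    exact h.nonoverlap (m + 1) p (p + 2) (by omega) hμk hp1 (by omega) (by omega) (by omega)
      (Or.inl ⟨by omega, by omega, by omega⟩)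
  · have hbq' : c (t + 1) = p + 1 := by omega
    have hconnpq := (hcprime t htL).1 p (by omega) (by omega)
    have hIn : jj (p + 1) - ii p ≤ (n : ℤ) + 1 := hconnpq.2.1.2
    obtain ⟨hqa, hqb⟩ := h.mem (p + 1) (by omega) hp2
    have hcut := hccut (t + 1) (by omega) (by omega)
    rw [hbq'] at hcut
    rcases hcut with h1 | h2 | h3
    · omega
    · exact h2 (show ConnPair n (ii (p + 1)) (jj (p + 1)) (ii (p + 2)) (jj (p + 2)) from
        ⟨Or.inr ⟨hpa, by omega, hpb⟩, ⟨by omega, by omega⟩, ⟨by omega, by omega⟩⟩)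
    · obtain ⟨m', ε', hm'1, hm'k, hε', hqm', hbc⟩ := h3
      have hrr1 : 1 ≤ rr m' := one_le_rr h (by omega)
      simp only [BoundaryCond] at hbc
      rcases Nat.le_one_iff_eq_zero_or_eq_one.mp hε' with rfl | rfl
      · -- ε' = 0 : rr m' = p + 1
        have hrm' : rr m' = p + 1 := by omega
        rw [hrm'] at hbc
        have hSR : SRight ii jj (p + 1 - 2) (p + 1) := by
          intro x hx1 hx2
          have hx : x = p := by omega
          subst hx
          exact ⟨he1, he3⟩
        rcases hbc with ⟨hie, _, hRimp⟩ | ⟨hje, _, hRimp⟩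
        · have h7 : jj (p + 2) < jj p := hRimp hSR
          omega
        · have h7 : ii (p + 2) < ii p := hRimp hSR
          omega
      · -- ε' = 1 : rr m' = p + 2
        have hrm' : rr m' = p + 2 := by omega
        have hm'm : m' = m + 2 := by
          by_contra hne
          rcases Nat.lt_or_ge m' (m + 2) with hl | hg
          · have : rr m' ≤ rr (m + 1) := rr_le_rr h (by omega) (by omega)
            omega
          · have hgt : m + 2 < m' := by omega
            have h8 : rr (m + 2) < rr m' := rr_lt_rr h hgt (by omega)
            omega
        have hrm2 : rr (m + 2) = p + 2 := by rw [hm'm] at hrm'; exact hrm'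
        have hseq : s = p + 2 := by omega
        subst hseq
        have hm2k : m + 2 < k := by omega
        have hR3 : SRight ii jj (rr (m + 2) - 1) (rr (m + 3)) := by
          rcases h.mono (m + 3) (by omega) (by omega) with hR | hL
          · simpa using hR
          · exfalso
            have hthis : SRight ii jj (rr (m + 1) - 1) (rr (m + 2)) :=
              (h.alt (m + 2) (by omega) hm2k).mpr (by simpa using hL)
            have h9 : ii (p + 1) < ii (p + 2) := (hthis (p + 1) (by omega) (by omega)).1
            omega
        have hpr3 : rr (m + 2) < rr (m + 3) := h.rrmono (m + 2) hm2k
        have hrrr : rr (m + 3) ≤ r := rr_le_r h (by omega)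
        have hpair2 : ii (p + 2) < ii (p + 3) ∧ jj (p + 2) < jj (p + 3) :=
          hR3 (p + 2) (by omega) (by omega)
        obtain ⟨h2a, h2b⟩ := hpair2
        rw [hrm'] at hbc
        have hSL : SLeft ii jj (p + 2 - 2) (p + 2) := by
          intro x hx1 hx2
          have hx : x = p + 1 := by omega
          subst hx
          exact ⟨hpa, hpb⟩
        rcases hbc with ⟨hie, hLimp, _⟩ | ⟨hje, hLimp, _⟩
        · have hie' : ii (p + 1) = ii (p + 3) := hie
          exact h.nonoverlap (m + 1) p (p + 3) (by omega) hμk hp1 (by omega) (by omega)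
            (by omega) (Or.inl ⟨by omega, by omega, by omega⟩)
        · have hje' : jj (p + 1) = jj (p + 3) := hje
          have h15 : ii (p + 3) < ii (p + 1) := hLimp hSL
          exact h.nonoverlap (m + 1) p (p + 3) (by omega) hμk hp1 (by omega) (by omega)
            (by omega) (Or.inl ⟨by omega, by omega, by omega⟩)

lemma core_b (h : IsAltSnake n r k rr ii jj)
    (p : ℕ) (hp1 : 1 ≤ p) (hp2 : p + 1 ≤ r)
    (m : ℕ) (hmk : m + 1 ≤ k) (hmp1 : rr m ≤ p) (hmp2 : p < rr (m + 1))
    (hcont : ContainedInPF n r k rr ii jj (p - 1) (p + 1))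
    (he1 : ii p < ii (p + 1)) (he2 : ii (p + 1) ≤ jj p) (he3 : jj p < jj (p + 1))
    (s : ℕ) (hs1 : 1 ≤ s) (hs2 : s ≤ r)
    (c1 : ii p < ii s) (c2 : ii s ≤ ii (p + 1))
    (c3 : jj p < jj s) (c4 : jj s ≤ jj (p + 1)) : s = p + 1 := by
  have hrm1 : 1 ≤ rr m := one_le_rr h (by omega)
  have hRm1 : SRight ii jj (rr m - 1) (rr (m + 1)) := by
    rcases h.mono (m + 1) (by omega) hmk with hR | hL
    · simpa using hR
    · exfalso
      have hL' : SLeft ii jj (rr m - 1) (rr (m + 1)) := hL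
      have := hL' p (by omega) (by omega)
      omega
  by_cases hsp : s = p + 1
  · exact hsp
  exfalso
  have hsp' : s ≠ p := by intro e; rw [e] at c1; omega
  by_cases hcaseC : rr (m + 1) < s
  · have hμk : m + 1 < k := by
      by_contra hc
      have hz : m + 1 = k := by omega
      rw [hz, h.rrk] at hcaseC
      omega
    exact h.nonoverlap (m + 1) p s (by omega) hμk hp1 (by omega) hcaseC hs2
      (Or.inl ⟨c1, by omega, c3⟩)
  push_neg at hcaseC
  by_cases hcaseA : rr m ≤ s
  · rcases Nat.lt_or_ge s (p + 1) with hlt | hge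
    · have hslt : s < p := by omega
      have := sright_chain hRm1 (x := s) (y := p) (by omega) hslt (by omega)
      omega
    · have hgt : p + 1 < s := by omega
      have := sright_chain hRm1 (x := p + 1) (y := s) (by omega) hgt hcaseC
      omega
  push_neg at hcaseA
  have hm1 : 1 ≤ m := by
    by_contra hm0
    have hz : m = 0 := by omega
    rw [hz, h.rr0] at hcaseA
    omega
  by_cases hqp : rr m < p
  · exact h.nonoverlap m s p hm1 (by omega) hs1 hcaseA hqp (by omega)
      (Or.inr ⟨c1, by omega, c3⟩)
  have hq' : rr m = p := by omega
  have hLm : SLeft ii jj (rr (m - 1) - 1) (rr m) := by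
    rcases h.mono m hm1 (by omega) with hR | hL
    · exfalso
      have h12 := ((h.alt m hm1 (by omega)).mp hR) p (by omega) (by omega)
      omega
    · exact hL
  have hrm1' : rr (m - 1) < rr m := by
    have := h.rrmono (m - 1) (by omega)
    rwa [show m - 1 + 1 = m by omega] at this
  have h1rm1 : 1 ≤ rr (m - 1) := one_le_rr h (by omega)
  have hs3 : rr (m - 1) ≤ s := by
    by_contra hs4
    push_neg at hs4
    have hm2 : 2 ≤ m := by
      by_contra hc
      have hz : m = 1 := by omega
      rw [hz] at hs4
      rw [show (1:ℕ) - 1 = 0 from rfl, h.rr0] at hs4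
      omega
    exact h.nonoverlap (m - 1) s p (by omega) (by omega) hs1 hs4 (by omega) (by omega)
      (Or.inr ⟨c1, by omega, c3⟩)
  have hp2' : 2 ≤ p := by
    have := rr_lt_rr h (show 0 < m by omega) (by omega)
    rw [h.rr0] at this
    omega
  have hpair : ii p < ii (p - 1) ∧ jj p < jj (p - 1) := by
    have hh := hLm (p - 1) (by omega) (by omega)
    rwa [show p - 1 + 1 = p by omega] at hh
  obtain ⟨hpa, hpb⟩ := hpair
  have hs5 : ii (p - 1) ≤ ii s ∧ jj (p - 1) ≤ jj s := by
    rcases Nat.eq_or_lt_of_le (show s ≤ p - 1 by omega) with he | hlt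
    · rw [he]
      exact ⟨le_refl _, le_refl _⟩
    · have := sleft_chain hLm (x := s) (y := p - 1) (by omega) hlt (by omega)
      exact ⟨le_of_lt this.1, le_of_lt this.2⟩
  obtain ⟨hs5a, hs5b⟩ := hs5
  obtain ⟨c, L, t, ⟨hL1, hc0, hcL, hcmono, hcprime, hccut⟩, htL, hta, htb⟩ := hcont
  by_cases hbq : c t + 1 < p
  · -- primality at break m
    have hpr := (hcprime t htL).2 m hm1 (by omega) (by omega) (by omega)
    rw [hq'] at hpr
    obtain ⟨hpr1, hpr2⟩ := hpr
    exact h.nonoverlap m (p - 1) (p + 1) hm1 (by omega) (by omega) (by omega) (by omega) hp2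
      (Or.inl ⟨by omega, by omega, by omega⟩)
  · have hct : c t = p - 1 := by omega
    have ht1 : 1 ≤ t := by
      by_contra h0
      have hz : t = 0 := by omega
      rw [hz, hc0] at hct
      omega
    have hconnpq := (hcprime t htL).1 p (by omega) (by omega)
    have hIn : jj (p + 1) - ii p ≤ (n : ℤ) + 1 := hconnpq.2.1.2
    obtain ⟨hma, hmb⟩ := h.mem (p - 1) (by omega) (by omega)
    obtain ⟨hpa', hpb'⟩ := h.mem p hp1 (by omega)
    have hcut := hccut t ht1 (by omega)
    rw [hct] at hcut
    rcases hcut with h1 | h2 | h3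
    · omega
    · apply h2
      have e : p - 1 + 1 = p := by omega
      rw [e]
      exact ⟨Or.inr ⟨hpa, by omega, hpb⟩, ⟨by omega, by omega⟩, ⟨by omega, by omega⟩⟩
    · obtain ⟨m', ε', hm'1, hm'k, hε', hqm', hbc⟩ := h3
      have hrr1 : 1 ≤ rr m' := one_le_rr h (by omega)
      simp only [BoundaryCond] at hbc
      rcases Nat.le_one_iff_eq_zero_or_eq_one.mp hε' with rfl | rfl
      · -- ε' = 0 : rr m' = p - 1
        have hrm' : rr m' = p - 1 := by omega
        rw [hrm'] at hbc
        have hrm1e : rr (m - 1) = p - 1 := by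
          have hm'lt : m' < m := by
            by_contra hge
            push_neg at hge
            have : rr m ≤ rr m' := rr_le_rr h hge (by omega)
            omega
          have h13 : rr m' ≤ rr (m - 1) := rr_le_rr h (by omega) (by omega)
          omega
        have hseq : s = p - 1 := by omega
        subst hseq
        have hm'e : m' = m - 1 := rr_inj h (by omega) (by omega) (by rw [hrm', hrm1e])
        have hm11 : 1 ≤ m - 1 := by omega
        have hRm0 : SRight ii jj (rr (m - 2) - 1) (rr (m - 1)) := by
          have halt := h.alt (m - 1) hm11 (by omega)
          rw [show m - 1 - 1 = m - 2 by omega, show m - 1 + 1 = m by omega] at halt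
          exact halt.mpr hLm
        have hrm2' : rr (m - 2) < rr (m - 1) := by
          have := h.rrmono (m - 2) (by omega)
          rwa [show m - 2 + 1 = m - 1 by omega] at this
        have h1rm2 : 1 ≤ rr (m - 2) := one_le_rr h (by omega)
        have hp3 : 3 ≤ p := by
          have := rr_lt_rr h (show 0 < m - 1 by omega) (by omega)
          rw [h.rr0] at this
          omega
        have hpairL : ii (p - 2) < ii (p - 1) ∧ jj (p - 2) < jj (p - 1) := by
          have h14 := hRm0 (p - 2) (by omega) (by omega)
          rwa [show p - 2 + 1 = p - 1 by omega] at h14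
        obtain ⟨hLa, hLb⟩ := hpairL
        have hSR : SRight ii jj (p - 1 - 2) (p - 1) := by
          intro x hx1 hx2
          have hx : x = p - 2 := by omega
          subst hx
          rw [show p - 2 + 1 = p - 1 by omega]
          exact ⟨hLa, hLb⟩
        rcases hbc with ⟨hie, _, hRimp⟩ | ⟨hje, _, hRimp⟩
        · rw [show p - 1 - 1 = p - 2 by omega, show p - 1 + 1 = p by omega] at hie
          have h15 := hRimp hSR
          rw [show p - 1 + 1 - 2 * 0 = p by omega, show p - 1 - 1 + 2 * 0 = p - 2 by omega]
            at h15
          exact h.nonoverlap (m - 1) (p - 2) (p + 1) hm11 (by omega) (by omega) (by omega)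
            (by omega) hp2 (Or.inl ⟨by omega, by omega, by omega⟩)
        · rw [show p - 1 - 1 = p - 2 by omega, show p - 1 + 1 = p by omega] at hje
          have h15 := hRimp hSR
          rw [show p - 1 + 1 - 2 * 0 = p by omega, show p - 1 - 1 + 2 * 0 = p - 2 by omega]
            at h15
          exact h.nonoverlap (m - 1) (p - 2) (p + 1) hm11 (by omega) (by omega) (by omega)
            (by omega) hp2 (Or.inl ⟨by omega, by omega, by omega⟩)
      · -- ε' = 1 : rr m' = p
        have hrm' : rr m' = p := by omega
        rw [hrm'] at hbc
        have hSL : SLeft ii jj (p - 2) p := by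
          intro x hx1 hx2
          have hx : x = p - 1 := by omega
          subst hx
          rw [show p - 1 + 1 = p by omega]
          exact ⟨hpa, hpb⟩
        rcases hbc with ⟨hie, hLimp, _⟩ | ⟨hje, hLimp, _⟩
        · have h15 := hLimp hSL
          rw [show p - 1 + 2 * 1 = p + 1 by omega, show p + 1 - 2 * 1 = p - 1 by omega] at h15
          omega
        · have h15 := hLimp hSL
          rw [show p - 1 + 2 * 1 = p + 1 by omega, show p + 1 - 2 * 1 = p - 1 by omega] at h15
          omega

end Cores

/-- Lemma (primefactorprop3): with `𝐬(p−1,p+1)` contained in a prime factor of `𝐬`,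
`r_m ≤ p < r_{m+1}` and `ε ∈ {0,1}` such that `i_{p+ε} < i_{p+1−ε} ≤ j_{p+ε} < j_{p+1−ε}`:
(a) any `1 ≤ s ≤ r` with `i_{p+ε} ≤ i_s < i_{p+1−ε} ≤ j_{p+ε} ≤ j_s < j_{p+1−ε}` equals
`p+ε`; (b) any `1 ≤ s ≤ r` with `i_{p+ε} < i_s ≤ i_{p+1−ε} ≤ j_{p+ε} < j_s ≤ j_{p+1−ε}`
equals `p+1−ε`. -/
theorem stmt_6 (n r k : ℕ) (hn : 1 ≤ n) (rr : ℕ → ℕ) (ii jj : ℕ → ℤ)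
    (h : IsAltSnake n r k rr ii jj)
    (p : ℕ) (hp1 : 1 ≤ p) (hp2 : p + 1 ≤ r)
    (m : ℕ) (hmk : m + 1 ≤ k) (hmp1 : rr m ≤ p) (hmp2 : p < rr (m + 1))
    (hcont : ContainedInPF n r k rr ii jj (p - 1) (p + 1))
    (ε : ℕ) (hε : ε ≤ 1)
    (he1 : ii (p + ε) < ii (p + 1 - ε)) (he2 : ii (p + 1 - ε) ≤ jj (p + ε))
    (he3 : jj (p + ε) < jj (p + 1 - ε)) :
    (∀ s, 1 ≤ s → s ≤ r → ii (p + ε) ≤ ii s → ii s < ii (p + 1 - ε) →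
      jj (p + ε) ≤ jj s → jj s < jj (p + 1 - ε) → s = p + ε) ∧
    (∀ s, 1 ≤ s → s ≤ r → ii (p + ε) < ii s → ii s ≤ ii (p + 1 - ε) →
      jj (p + ε) < jj s → jj s ≤ jj (p + 1 - ε) → s = p + 1 - ε) := by
  rcases Nat.le_one_iff_eq_zero_or_eq_one.mp hε with rfl | rfl
  · simp only [Nat.add_zero, Nat.sub_zero] at he1 he2 he3 ⊢
    constructor
    · intro s hs1 hs2 d1 d2 d3 d4
      exact core_a h p hp1 hp2 m hmk hmp1 hmp2 hcont he1 he2 he3 s hs1 hs2 d1 d2 d3 d4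
    · intro s hs1 hs2 d1 d2 d3 d4
      exact core_b h p hp1 hp2 m hmk hmp1 hmp2 hcont he1 he2 he3 s hs1 hs2 d1 d2 d3 d4
  · simp only [Nat.add_sub_cancel] at he1 he2 he3 ⊢
    have h' := isAltSnake_neg h
    have hcont' := containedInPF_neg hcont
    constructor
    · intro s hs1 hs2 d1 d2 d3 d4
      exact core_b h' p hp1 hp2 m hmk hmp1 hmp2 hcont' (by beta_reduce; omega)
        (by beta_reduce; omega) (by beta_reduce; omega) s hs1 hs2 (by beta_reduce; omega)
        (by beta_reduce; omega) (by beta_reduce; omega) (by beta_reduce; omega)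
    · intro s hs1 hs2 d1 d2 d3 d4
      exact core_a h' p hp1 hp2 m hmk hmp1 hmp2 hcont' (by beta_reduce; omega)
        (by beta_reduce; omega) (by beta_reduce; omega) s hs1 hs2 (by beta_reduce; omega)
        (by beta_reduce; omega) (by beta_reduce; omega) (by beta_reduce; omega)

end AltSnakePaper
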